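/- For every s ≥ 0, the monic orthogonal polynomials with respect to μ satisfy the recursion Q_{2^{s+1}} = (Q_{2^s})² − (1 − 2γ_{s+1})·r_s²/4. -/

import Mathlib

open Polynomial MeasureTheory Filter

/-- `r γ s` : the recursively defined scales `r 0 = 1`, `r (s+1) = γ (s+1) * (r s)²`. -/
noncomputable def r (γ : ℕ → ℝ) : ℕ → ℝ
  | 0 => 1
  | s + 1 => γ (s + 1) * (r γ s) ^ 2

/-- `P γ s` : the polynomial `P_{2^s}`, with `P_1 = X - 1` and
`P_{2^{s+1}} = P_{2^s} · (P_{2^s} + r_s)`. -/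
noncomputable def P (γ : ℕ → ℝ) : ℕ → Polynomial ℝ
  | 0 => X - 1
  | s + 1 => P γ s * (P γ s + C (r γ s))

/-- The integral `∫ f dν_s` of a function `f` against the normalized counting measure `ν_s`
on the `2^s` (simple, real) zeros of `P_{2^s} + r_s/2`. -/
noncomputable def nuInt (γ : ℕ → ℝ) (s : ℕ) (f : ℝ → ℝ) : ℝ :=
  (((P γ s + C (r γ s / 2)).roots.map f).sum) / 2 ^ s

namespace Stmt5Aux

variable {γ : ℕ → ℝ}

lemma r_pos (hγ : ∀ s : ℕ, 0 < γ (s + 1) ∧ γ (s + 1) < 1 / 4) : ∀ t, 0 < r γ t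
  | 0 => one_pos
  | (t+1) => mul_pos (hγ t).1 (pow_pos (r_pos hγ t) 2)

lemma P_md (γ : ℕ → ℝ) : ∀ t, (P γ t).Monic ∧ (P γ t).degree = ((2 ^ t : ℕ) : WithBot ℕ)
  | 0 => by
      constructor
      · show (X - 1 : Polynomial ℝ).Monic
        rw [← C_1]
        exact monic_X_sub_C (1 : ℝ)
      · show (X - 1 : Polynomial ℝ).degree = ((1 : ℕ) : WithBot ℕ)
        rw [← C_1, degree_X_sub_C]
        rfl
  | (t+1) => by
      obtain ⟨hm, hd⟩ := P_md γ t
      have hCd : degree (C (r γ t)) < degree (P γ t) := by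
        refine lt_of_le_of_lt degree_C_le ?_
        rw [hd]
        exact_mod_cast pow_pos (by norm_num : (0:ℕ) < 2) t
      have hadd : degree (P γ t + C (r γ t)) = ((2 ^ t : ℕ) : WithBot ℕ) := by
        rw [degree_add_eq_left_of_degree_lt hCd, hd]
      constructor
      · exact hm.mul (hm.add_of_left hCd)
      · show (P γ t * (P γ t + C (r γ t))).degree = _
        rw [degree_mul, hd, hadd]
        rw [← Nat.cast_add]
        congr 1
        ring

lemma P_monic (γ : ℕ → ℝ) (t : ℕ) : (P γ t).Monic := (P_md γ t).1

lemma P_natDegree (γ : ℕ → ℝ) (t : ℕ) : (P γ t).natDegree = 2 ^ t :=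
  natDegree_eq_of_degree_eq_some (P_md γ t).2

lemma PC_monic (γ : ℕ → ℝ) (t : ℕ) (y : ℝ) : (P γ t - C y).Monic := by
  have hCd : degree (C (-y)) < degree (P γ t) := by
    refine lt_of_le_of_lt degree_C_le ?_
    rw [(P_md γ t).2]
    exact_mod_cast pow_pos (by norm_num : (0:ℕ) < 2) t
  have h := (P_monic γ t).add_of_left hCd
  rwa [C_neg, ← sub_eq_add_neg] at h

/-- The key factorization: if `y₁ + y₂ = -r_t` and `y₁ y₂ = -v` then
`P_{t+1} - v = (P_t - y₁)(P_t - y₂)`. -/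
lemma factor (γ : ℕ → ℝ) (t : ℕ) {v y₁ y₂ : ℝ} (hsum : y₁ + y₂ = -(r γ t))
    (hprod : y₁ * y₂ = -v) :
    P γ (t+1) - C v = (P γ t - C y₁) * (P γ t - C y₂) := by
  have h1 : (C (r γ t) : Polynomial ℝ) = -(C y₁) - C y₂ := by
    rw [← C_neg, ← C_sub]
    congr 1
    linarith
  have h2 : (C v : Polynomial ℝ) = -(C y₁ * C y₂) := by
    rw [← C_mul, ← C_neg]
    congr 1
    linarith
  show P γ t * (P γ t + C (r γ t)) - C v = _
  rw [h1, h2]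
  ring

/-- Existence of the two preimage values with the needed bounds. -/
lemma exists_y (hγ : ∀ s : ℕ, 0 < γ (s + 1) ∧ γ (s + 1) < 1 / 4) (t : ℕ) {v : ℝ}
    (h1 : -(r γ (t+1)) ≤ v) (h2 : v ≤ 0) :
    ∃ y₁ y₂ : ℝ, y₁ + y₂ = -(r γ t) ∧ y₁ * y₂ = -v ∧
      (-(r γ t) ≤ y₁ ∧ y₁ ≤ 0) ∧ (-(r γ t) ≤ y₂ ∧ y₂ ≤ 0) := by
  have hrt := r_pos hγ t
  have hd0 : (0:ℝ) ≤ r γ t ^ 2 + 4 * v := by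
    have hr1 : r γ (t+1) = γ (t+1) * r γ t ^ 2 := rfl
    have hg := hγ t
    nlinarith [sq_nonneg (r γ t)]
  set d : ℝ := r γ t ^ 2 + 4 * v with hdd
  have hs : Real.sqrt d ^ 2 = d := Real.sq_sqrt hd0
  have hsn : 0 ≤ Real.sqrt d := Real.sqrt_nonneg d
  have hsle : Real.sqrt d ≤ r γ t := by
    rw [← Real.sqrt_sq hrt.le]
    apply Real.sqrt_le_sqrt
    nlinarith
  refine ⟨(-(r γ t) - Real.sqrt d) / 2, (-(r γ t) + Real.sqrt d) / 2, by ring, ?_, ?_, ?_⟩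
  · have : ((-(r γ t) - Real.sqrt d) / 2) * ((-(r γ t) + Real.sqrt d) / 2)
        = (r γ t ^ 2 - Real.sqrt d ^ 2) / 4 := by ring
    rw [this, hs]
    simp only [hdd]
    ring
  · constructor <;> [linarith; linarith]
  · constructor <;> [linarith; linarith]

/-- The roots of `P_t - v` (with multiplicity) number `2^t` for `v ∈ [-r_t, 0]`. -/
lemma keyA (hγ : ∀ s : ℕ, 0 < γ (s + 1) ∧ γ (s + 1) < 1 / 4) :
    ∀ t : ℕ, ∀ v : ℝ, -(r γ t) ≤ v → v ≤ 0 →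
      Multiset.card (P γ t - C v).roots = 2 ^ t := by
  intro t
  induction t with
  | zero =>
    intro v _ _
    have h : P γ 0 - C v = X - C (1 + v) := by
      show X - 1 - C v = _
      rw [C_add, C_1]; ring
    rw [h, roots_X_sub_C]
    rfl
  | succ t ih =>
    intro v h1 h2
    obtain ⟨y₁, y₂, hsum, hprod, hy₁, hy₂⟩ := exists_y hγ t h1 h2
    rw [factor γ t hsum hprod,
      roots_mul (mul_ne_zero (PC_monic γ t y₁).ne_zero (PC_monic γ t y₂).ne_zero),
      Multiset.card_add, ih y₁ hy₁.1 hy₁.2, ih y₂ hy₂.1 hy₂.2]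
    ring

/-- For `q` of degree `< 2^t`, the sum of `q` over the roots of `P_t - v` is independent
of `v ∈ [-r_t, 0]`. -/
lemma keyB (hγ : ∀ s : ℕ, 0 < γ (s + 1) ∧ γ (s + 1) < 1 / 4) :
    ∀ t : ℕ, ∀ v w : ℝ, -(r γ t) ≤ v → v ≤ 0 → -(r γ t) ≤ w → w ≤ 0 →
      ∀ q : Polynomial ℝ, q.natDegree < 2 ^ t →
      (((P γ t - C v).roots.map (fun x => q.eval x)).sum)
        = (((P γ t - C w).roots.map (fun x => q.eval x)).sum) := by
  intro t
  induction t with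
  | zero =>
    intro v w _ _ _ _ q hq
    have hqc : q = C (q.coeff 0) := eq_C_of_natDegree_le_zero (by omega)
    have h : ∀ u : ℝ, P γ 0 - C u = X - C (1 + u) := by
      intro u; show X - 1 - C u = _; rw [C_add, C_1]; ring
    rw [h v, h w, roots_X_sub_C, roots_X_sub_C, hqc]
    simp
  | succ t ih =>
    intro v w hv1 hv2 hw1 hw2 q hq
    -- division of q by P_t
    set A : Polynomial ℝ := q /ₘ (P γ t) with hA
    set B : Polynomial ℝ := q %ₘ (P γ t) with hB
    have hmon := P_monic γ t
    have hqAB : q = P γ t * A + B := by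
      have := modByMonic_add_div q (P γ t)
      linear_combination -this
    have hAdeg : A.natDegree < 2 ^ t := by
      rw [hA, natDegree_divByMonic q hmon, P_natDegree]
      have : (2:ℕ) ^ (t+1) = 2 ^ t + 2 ^ t := by ring
      omega
    have hBdeg : B.natDegree < 2 ^ t := by
      have hd := degree_modByMonic_lt q hmon
      rw [(P_md γ t).2] at hd
      rcases eq_or_ne B 0 with h0 | h0
      · rw [h0]; simpa using pow_pos (by norm_num : (0:ℕ) < 2) t
      · exact (natDegree_lt_iff_degree_lt h0).mpr hd
    -- evaluation on a fiber
    have fiber : ∀ y : ℝ, -(r γ t) ≤ y → y ≤ 0 →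
        (((P γ t - C y).roots.map (fun x => q.eval x)).sum)
          = y * (((P γ t - C y).roots.map (fun x => A.eval x)).sum)
            + (((P γ t - C y).roots.map (fun x => B.eval x)).sum) := by
      intro y _ _
      rw [← Multiset.sum_map_mul_left, ← Multiset.sum_map_add]
      refine congrArg Multiset.sum (Multiset.map_congr rfl ?_)
      intro x hx
      have hroot : (P γ t).eval x = y := by
        have := isRoot_of_mem_roots hx
        simp only [IsRoot, eval_sub, eval_C] at this
        linarith
      rw [hqAB]
      simp [hroot]
    obtain ⟨y₁, y₂, hsum, hprod, hy₁, hy₂⟩ := exists_y hγ t hv1 hv2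
    obtain ⟨z₁, z₂, hzsum, hzprod, hz₁, hz₂⟩ := exists_y hγ t hw1 hw2
    have expand : ∀ (u : ℝ) (a b : ℝ), a + b = -(r γ t) → a * b = -u →
        (-(r γ t) ≤ a) → (a ≤ 0) → (-(r γ t) ≤ b) → (b ≤ 0) →
        (((P γ (t+1) - C u).roots.map (fun x => q.eval x)).sum)
          = -(r γ t) * (((P γ t - C y₁).roots.map (fun x => A.eval x)).sum)
            + 2 * (((P γ t - C y₁).roots.map (fun x => B.eval x)).sum) := by
      intro u a b hab hab2 ha1 ha2 hb1 hb2
      rw [factor γ t hab hab2,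
        roots_mul (mul_ne_zero (PC_monic γ t a).ne_zero (PC_monic γ t b).ne_zero),
        Multiset.map_add, Multiset.sum_add, fiber a ha1 ha2, fiber b hb1 hb2,
        ih a y₁ ha1 ha2 hy₁.1 hy₁.2 A hAdeg, ih b y₁ hb1 hb2 hy₁.1 hy₁.2 A hAdeg,
        ih a y₁ ha1 ha2 hy₁.1 hy₁.2 B hBdeg, ih b y₁ hb1 hb2 hy₁.1 hy₁.2 B hBdeg]
      have : a = -(r γ t) - b := by linarith
      rw [this]
      ring
    rw [expand v y₁ y₂ hsum hprod hy₁.1 hy₁.2 hy₂.1 hy₂.2,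
      expand w z₁ z₂ hzsum hzprod hz₁.1 hz₁.2 hz₂.1 hz₂.2]

/-- The crucial vanishing: for `deg p < 2^s`, the sum of `(P_s + r_s/2)·p` over the roots of
`P_u - v` vanishes for every `u ≥ s+1` and every `v ∈ [-r_u, 0]`. -/
lemma claimD (hγ : ∀ s : ℕ, 0 < γ (s + 1) ∧ γ (s + 1) < 1 / 4) (s : ℕ) (p : Polynomial ℝ)
    (hp : p.natDegree < 2 ^ s) :
    ∀ t : ℕ, ∀ v : ℝ, -(r γ (s+1+t)) ≤ v → v ≤ 0 →
      (((P γ (s+1+t) - C v).roots.map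
        (fun x => ((P γ s + C (r γ s / 2)) * p).eval x)).sum) = 0 := by
  intro t
  induction t with
  | zero =>
    intro v h1 h2
    obtain ⟨y₁, y₂, hsum, hprod, hy₁, hy₂⟩ := exists_y hγ s h1 h2
    have fiber : ∀ y : ℝ,
        (((P γ s - C y).roots.map (fun x => ((P γ s + C (r γ s / 2)) * p).eval x)).sum)
          = (y + r γ s / 2) * (((P γ s - C y).roots.map (fun x => p.eval x)).sum) := by
      intro y
      rw [← Multiset.sum_map_mul_left]
      refine congrArg Multiset.sum (Multiset.map_congr rfl ?_)
      intro x hx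
      have hroot : (P γ s).eval x = y := by
        have := isRoot_of_mem_roots hx
        simp only [IsRoot, eval_sub, eval_C] at this
        linarith
      simp [hroot]
    rw [factor γ s hsum hprod,
      roots_mul (mul_ne_zero (PC_monic γ s y₁).ne_zero (PC_monic γ s y₂).ne_zero),
      Multiset.map_add, Multiset.sum_add, fiber y₁, fiber y₂,
      keyB hγ s y₂ y₁ hy₂.1 hy₂.2 hy₁.1 hy₁.2 p hp]
    have : y₂ = -(r γ s) - y₁ := by linarith
    rw [this]
    ring
  | succ t ih =>
    intro v h1 h2
    obtain ⟨y₁, y₂, hsum, hprod, hy₁, hy₂⟩ := exists_y hγ (s+1+t) h1 h2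
    rw [show s+1+(t+1) = (s+1+t)+1 from rfl, factor γ (s+1+t) hsum hprod,
      roots_mul (mul_ne_zero (PC_monic γ _ y₁).ne_zero (PC_monic γ _ y₂).ne_zero),
      Multiset.map_add, Multiset.sum_add, ih y₁ hy₁.1 hy₁.2, ih y₂ hy₂.1 hy₂.2]
    ring

lemma nuInt_zero (hγ : ∀ s : ℕ, 0 < γ (s + 1) ∧ γ (s + 1) < 1 / 4) (s : ℕ) (p : Polynomial ℝ)
    (hp : p.natDegree < 2 ^ s) :
    ∀ u : ℕ, s + 1 ≤ u →
      nuInt γ u (fun x => ((P γ s + C (r γ s / 2)) * p).eval x) = 0 := by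
  intro u hu
  obtain ⟨t, rfl⟩ := Nat.exists_eq_add_of_le hu
  have hr := r_pos hγ (s+1+t)
  have hrw : P γ (s+1+t) + C (r γ (s+1+t) / 2) = P γ (s+1+t) - C (-(r γ (s+1+t) / 2)) := by
    rw [C_neg, sub_neg_eq_add]
  rw [nuInt, hrw, claimD hγ s p hp t (-(r γ (s+1+t) / 2)) (by linarith) (by linarith)]
  simp

end Stmt5Aux

open Stmt5Aux in
theorem stmt_5 (γ : ℕ → ℝ) (hγ : ∀ s : ℕ, 0 < γ (s + 1) ∧ γ (s + 1) < 1 / 4)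
    (μ : Measure ℝ) [IsProbabilityMeasure μ]
    (hμint : ∀ p : Polynomial ℝ, Integrable (fun x => p.eval x) μ)
    (hμpos : ∀ p : Polynomial ℝ, p ≠ 0 → 0 < ∫ x, (p.eval x) ^ 2 ∂μ)
    (hμconv : ∀ p : Polynomial ℝ,
      Tendsto (fun s => nuInt γ s (fun x => p.eval x)) atTop (nhds (∫ x, p.eval x ∂μ)))
    (Q : ℕ → Polynomial ℝ) (hQmonic : ∀ n, (Q n).Monic) (hQdeg : ∀ n, (Q n).natDegree = n)
    (hQorth : ∀ n : ℕ, ∀ p : Polynomial ℝ, p.degree < (n : WithBot ℕ) →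
      ∫ x, (Q n).eval x * p.eval x ∂μ = 0)
    (s : ℕ) :
    Q (2 ^ (s + 1)) = (Q (2 ^ s)) ^ 2 - C ((1 - 2 * γ (s + 1)) * (r γ s) ^ 2 / 4) := by
  -- Step 1: Q (2^k) = P γ k + C (r γ k / 2) for every k.
  have key : ∀ k : ℕ, Q (2 ^ k) = P γ k + C (r γ k / 2) := by
    intro k
    set R : Polynomial ℝ := P γ k + C (r γ k / 2) with hRdef
    have hCd : degree (C (r γ k / 2)) < degree (P γ k) := by
      refine lt_of_le_of_lt degree_C_le ?_
      rw [(P_md γ k).2]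
      exact_mod_cast pow_pos (by norm_num : (0:ℕ) < 2) k
    have hRmonic : R.Monic := (P_monic γ k).add_of_left hCd
    have hRdeg : R.degree = ((2 ^ k : ℕ) : WithBot ℕ) := by
      rw [hRdef, degree_add_eq_left_of_degree_lt hCd, (P_md γ k).2]
    have horthR : ∀ p : Polynomial ℝ, p.natDegree < 2 ^ k →
        ∫ x, R.eval x * p.eval x ∂μ = 0 := by
      intro p hp
      have h1 := hμconv (R * p)
      have h2 : (fun u => nuInt γ u (fun x => (R * p).eval x)) =ᶠ[atTop] (fun _ => (0:ℝ)) :=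
        eventually_atTop.mpr ⟨k + 1, fun u hu => nuInt_zero hγ k p hp u hu⟩
      have h3 : Tendsto (fun u => nuInt γ u (fun x => (R * p).eval x)) atTop (nhds 0) :=
        Tendsto.congr' h2.symm tendsto_const_nhds
      have h4 : ∫ x, (R * p).eval x ∂μ = 0 := tendsto_nhds_unique h1 h3
      calc ∫ x, R.eval x * p.eval x ∂μ = ∫ x, (R * p).eval x ∂μ := by
            simp only [eval_mul]
        _ = 0 := h4
    set T : Polynomial ℝ := Q (2 ^ k) - R with hTdef
    rcases eq_or_ne T 0 with hT | hT
    · exact sub_eq_zero.mp hT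
    · exfalso
      have hQdegk : (Q (2 ^ k)).degree = ((2 ^ k : ℕ) : WithBot ℕ) := by
        rw [degree_eq_natDegree (hQmonic _).ne_zero, hQdeg]
      have hdegT : T.degree < ((2 ^ k : ℕ) : WithBot ℕ) := by
        have := degree_sub_lt (hQdegk.trans hRdeg.symm) (hQmonic _).ne_zero
          ((hQmonic _).leadingCoeff.trans hRmonic.leadingCoeff.symm)
        rwa [hQdegk] at this
      have h5 : ∫ x, (Q (2 ^ k)).eval x * T.eval x ∂μ = 0 := hQorth (2 ^ k) T hdegT
      have h6 : ∫ x, R.eval x * T.eval x ∂μ = 0 :=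
        horthR T ((natDegree_lt_iff_degree_lt hT).mpr hdegT)
      have h7 : ∫ x, (T.eval x) ^ 2 ∂μ = 0 := by
        have hpt : ∀ x : ℝ, (T.eval x) ^ 2
            = (Q (2 ^ k) * T).eval x - (R * T).eval x := by
          intro x
          simp only [eval_mul, hTdef, eval_sub]
          ring
        rw [integral_congr_ae (Filter.Eventually.of_forall hpt),
          integral_sub (hμint _) (hμint _)]
        have h5' : ∫ x, (Q (2 ^ k) * T).eval x ∂μ = 0 := by
          simpa only [eval_mul] using h5
        have h6' : ∫ x, (R * T).eval x ∂μ = 0 := by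
          simpa only [eval_mul] using h6
        rw [h5', h6', sub_zero]
      exact absurd h7 (ne_of_gt (hμpos T hT))
  rw [key (s+1), key s]
  -- Step 2: the polynomial identity.
  have hr1 : r γ (s+1) = γ (s+1) * r γ s ^ 2 := rfl
  set a : ℝ := γ (s+1)
  set b : ℝ := r γ s
  have e1 : (C (b/2) : Polynomial ℝ) + C (b/2) = C b := by
    rw [← C_add]; congr 1; ring
  have e2 : (C (b/2) : Polynomial ℝ) * C (b/2) - C ((1 - 2*a) * b^2/4) = C (a * b^2 / 2) := by
    rw [← C_mul, ← C_sub]; congr 1; ring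
  show P γ s * (P γ s + C b) + C (r γ (s+1) / 2) = _
  rw [hr1]
  have : (C (a * b ^ 2 / 2) : Polynomial ℝ) = C (γ (s+1) * r γ s ^ 2 / 2) := rfl
  linear_combination (-(P γ s)) * e1 - e2
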